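/- For n, l ≥ 0 and k ≥ 0, let p_k(n, l) be the number of pairs (λ, R) where λ is a partition of n into exactly l distinct positive parts and R is a k-element set of rafts of λ, and let r(n, l) be the number of partitions of n into exactly l distinct positive parts no two of which are consecutive integers. Then for all n, l ≥ 0, ∑_{k=0}^{∞} (−1)^k p_k(n, l) = r(n, l). (The sum is finite since p_k(n, l) = 0 for all sufficiently large k.) -/

import Mathlib

open Finset

/-- Finite q-Pochhammer symbol: (a;q)_n = ∏_{j=0}^{n-1} (1 - a q^j). -/
noncomputable def qPoch (a q : ℂ) (n : ℕ) : ℂ := ∏ j ∈ Finset.range n, (1 - a * q ^ j)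

/-- Infinite q-Pochhammer symbol: (a;q)_∞ = ∏_{j=0}^{∞} (1 - a q^j). -/
noncomputable def qPochInf (a q : ℂ) : ℂ := ∏' j : ℕ, (1 - a * q ^ j)

/-- Gaussian binomial coefficient [N choose j]_q, as a rational function of q;
for 0 < |q| < 1 (and for |q⁻¹| > 1) this agrees with the q-binomial polynomial
evaluated at q. -/
noncomputable def qBinom (q : ℂ) (N j : ℕ) : ℂ :=
  qPoch q q N / (qPoch q q j * qPoch q q (N - j))

/-- The set of rafts of a finite set of parts. -/
def rafts (s : Finset ℕ) : Finset ℕ := s.filter (fun x => x + 1 ∈ s ∧ x + 2 ∉ s)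

lemma rafts_subset (s : Finset ℕ) : rafts s ⊆ s := Finset.filter_subset _ _

lemma rafts_eq_empty_iff (s : Finset ℕ) :
    rafts s = ∅ ↔ ∀ x ∈ s, x + 1 ∉ s := by
  constructor
  · intro h
    by_contra hc
    push_neg at hc
    obtain ⟨x, hx, hx1⟩ := hc
    set T := s.filter (fun y => y + 1 ∈ s) with hT
    have hTne : T.Nonempty := ⟨x, by simp [hT, hx, hx1]⟩
    set m := T.max' hTne with hm
    have hmT : m ∈ T := T.max'_mem hTne
    simp only [hT, Finset.mem_filter] at hmT
    have hm2 : m + 2 ∉ s := by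
      intro h2
      have : m + 1 ∈ T := by simp [hT, hmT.2, h2]
      have := T.le_max' _ this
      omega
    have : m ∈ rafts s := by simp [rafts, hmT.1, hmT.2, hm2]
    rw [h] at this
    exact absurd this (Finset.notMem_empty _)
  · intro h
    rw [Finset.eq_empty_iff_forall_notMem]
    intro x hx
    simp only [rafts, Finset.mem_filter] at hx
    exact h x hx.1 hx.2.1

lemma mem_range_of_sum (s : Finset ℕ) (n : ℕ) (hs : s.sum id = n) :
    s ⊆ Finset.range (n + 1) := by
  intro x hx
  have : id x ≤ s.sum id := Finset.single_le_sum (fun i _ => Nat.zero_le (id i)) hx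
  have hxn : x ≤ n := by rw [← hs]; exact this
  simp only [Finset.mem_range]
  omega

/-- Refined inclusion-exclusion on designated rafts, keeping track of the
number of parts. -/
theorem inclusion_exclusion_rafts_two_var (p : ℕ → ℕ → ℕ → ℕ)
    (hp : ∀ k n l, p k n l = Nat.card {pr : Finset ℕ × Finset ℕ //
      0 ∉ pr.1 ∧ pr.1.sum id = n ∧ pr.1.card = l ∧ pr.2.card = k ∧
      (∀ r ∈ pr.2, r ∈ pr.1 ∧ r + 1 ∈ pr.1 ∧ r + 2 ∉ pr.1)})
    (r : ℕ → ℕ → ℕ)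
    (hr : ∀ n l, r n l = Nat.card {s : Finset ℕ //
      0 ∉ s ∧ s.sum id = n ∧ s.card = l ∧ ∀ x ∈ s, x + 1 ∉ s})
    (n l : ℕ) :
    ∑' k : ℕ, ((-1 : ℤ) ^ k * (p k n l : ℤ)) = (r n l : ℤ) := by
  classical
  set P : Finset (Finset ℕ) := (Finset.range (n + 1)).powerset with hP
  -- the set of partitions
  set A : Finset (Finset ℕ) :=
    P.filter (fun s => 0 ∉ s ∧ s.sum id = n ∧ s.card = l) with hA
  -- the set of pairs counted by p k
  set B : ℕ → Finset (Finset ℕ × Finset ℕ) := fun k =>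
    (P ×ˢ P).filter (fun pr => (0 ∉ pr.1 ∧ pr.1.sum id = n ∧ pr.1.card = l) ∧
      pr.2.card = k ∧ pr.2 ⊆ rafts pr.1) with hB
  -- p k n l = (B k).card
  have hpB : ∀ k, p k n l = (B k).card := by
    intro k
    rw [hp]
    have hequiv : ∀ pr : Finset ℕ × Finset ℕ,
        (0 ∉ pr.1 ∧ pr.1.sum id = n ∧ pr.1.card = l ∧ pr.2.card = k ∧
          (∀ r ∈ pr.2, r ∈ pr.1 ∧ r + 1 ∈ pr.1 ∧ r + 2 ∉ pr.1)) ↔ pr ∈ B k := by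
      intro pr
      simp only [hB, Finset.mem_filter, Finset.mem_product, hP, Finset.mem_powerset]
      constructor
      · rintro ⟨h0, hsum, hcard, hk, hraft⟩
        have h1 : pr.1 ⊆ Finset.range (n + 1) := mem_range_of_sum _ _ hsum
        have h2 : pr.2 ⊆ rafts pr.1 := by
          intro x hx
          obtain ⟨a, b, c⟩ := hraft x hx
          simp [rafts, a, b, c]
        exact ⟨⟨h1, fun x hx => h1 (rafts_subset _ (h2 hx))⟩, ⟨h0, hsum, hcard⟩, hk, h2⟩
      · rintro ⟨-, ⟨h0, hsum, hcard⟩, hk, h2⟩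
        refine ⟨h0, hsum, hcard, hk, fun x hx => ?_⟩
        have := h2 hx
        simp only [rafts, Finset.mem_filter] at this
        exact ⟨this.1, this.2.1, this.2.2⟩
    rw [Nat.card_congr (Equiv.subtypeEquivRight hequiv)]
    simp [Nat.card_eq_fintype_card, Fintype.card_coe]
  -- (B k).card as a sum over A
  have hBcard : ∀ k, (B k).card = ∑ s ∈ A, Nat.choose (rafts s).card k := by
    intro k
    rw [Finset.card_eq_sum_card_fiberwise (f := Prod.fst) (t := A)
      (fun pr hpr => by
        simp only [hB, Finset.mem_filter, Finset.mem_product] at hpr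
        simp only [hA, Finset.mem_filter]
        exact Finset.mem_filter.mpr ⟨(Finset.mem_product.mp (Finset.mem_filter.mp hpr).1).1,
          (Finset.mem_filter.mp hpr).2.1⟩)]
    refine Finset.sum_congr rfl (fun s hs => ?_)
    have : (B k).filter (fun pr => pr.1 = s) =
        ((rafts s).powersetCard k).image (fun R => (s, R)) := by
      ext pr
      simp only [Finset.mem_filter, Finset.mem_image, Finset.mem_powersetCard,
        hB, Finset.mem_product, hP, Finset.mem_powerset]
      constructor
      · rintro ⟨⟨-, -, hk, hsub⟩, h1⟩
        exact ⟨pr.2, ⟨by rw [← h1]; exact hsub, hk⟩, by rw [← h1]⟩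
      · rintro ⟨R, ⟨hsub, hk⟩, hpr⟩
        simp only [hA, Finset.mem_filter, hP, Finset.mem_powerset] at hs
        subst hpr
        exact ⟨⟨⟨hs.1, fun x hx => hs.1 (rafts_subset _ (hsub hx))⟩, hs.2, hk, hsub⟩, rfl⟩
    rw [this, Finset.card_image_of_injective _ (fun a b h => by simpa using h),
      Finset.card_powersetCard]
  -- p vanishes for k > l
  have hpz : ∀ k, l < k → p k n l = 0 := by
    intro k hk
    rw [hpB k]
    rw [Finset.card_eq_zero, Finset.eq_empty_iff_forall_notMem]
    intro pr hpr
    simp only [hB, Finset.mem_filter, Finset.mem_product] at hpr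
    obtain ⟨-, ⟨-, -, hcard⟩, hkc, hsub⟩ := hpr
    have : pr.2.card ≤ pr.1.card :=
      Finset.card_le_card (fun x hx => rafts_subset _ (hsub hx))
    omega
  -- the tsum is a finite sum
  have htsum : ∑' k : ℕ, ((-1 : ℤ) ^ k * (p k n l : ℤ)) =
      ∑ k ∈ Finset.range (l + 1), ((-1 : ℤ) ^ k * (p k n l : ℤ)) := by
    apply tsum_eq_sum
    intro k hk
    simp only [Finset.mem_range] at hk
    rw [hpz k (by omega)]
    simp
  rw [htsum]
  -- rewrite and swap sums
  have : ∑ k ∈ Finset.range (l + 1), ((-1 : ℤ) ^ k * (p k n l : ℤ)) =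
      ∑ s ∈ A, ∑ k ∈ Finset.range (l + 1), ((-1 : ℤ) ^ k * (Nat.choose (rafts s).card k : ℤ)) := by
    rw [Finset.sum_comm]
    refine Finset.sum_congr rfl (fun k _ => ?_)
    rw [hpB k, hBcard k]
    push_cast
    rw [Finset.mul_sum]
  rw [this]
  -- inner alternating sum
  have hinner : ∀ s ∈ A,
      ∑ k ∈ Finset.range (l + 1), ((-1 : ℤ) ^ k * (Nat.choose (rafts s).card k : ℤ)) =
      if (rafts s).card = 0 then 1 else 0 := by
    intro s hs
    have hle : (rafts s).card ≤ l := by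
      simp only [hA, Finset.mem_filter] at hs
      have := Finset.card_le_card (rafts_subset s)
      omega
    rw [← Finset.sum_subset (Finset.range_subset_range.mpr (by omega :
        (rafts s).card + 1 ≤ l + 1)) (fun k _ hk => by
      simp only [Finset.mem_range] at hk
      rw [Nat.choose_eq_zero_of_lt (by omega)]
      simp)]
    exact Int.alternating_sum_range_choose
  rw [Finset.sum_congr rfl hinner]
  rw [Finset.sum_boole]
  -- identify with r n l
  rw [hr]
  have hequiv : ∀ s : Finset ℕ,
      (0 ∉ s ∧ s.sum id = n ∧ s.card = l ∧ ∀ x ∈ s, x + 1 ∉ s) ↔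
      s ∈ A.filter (fun s => (rafts s).card = 0) := by
    intro s
    simp only [hA, Finset.mem_filter, hP, Finset.mem_powerset, Finset.card_eq_zero,
      rafts_eq_empty_iff]
    constructor
    · rintro ⟨h0, hsum, hcard, hnc⟩
      exact ⟨⟨mem_range_of_sum _ _ hsum, h0, hsum, hcard⟩, hnc⟩
    · rintro ⟨⟨-, h0, hsum, hcard⟩, hnc⟩
      exact ⟨h0, hsum, hcard, hnc⟩
  rw [Nat.card_congr (Equiv.subtypeEquivRight hequiv), Nat.card_eq_fintype_card,
    Fintype.card_coe]
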